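/- Let X be a real Banach space whose norm satisfies the q-uniform convexity inequality ‖(x+y)/2‖^q ≤ (‖x‖^q + ‖y‖^q)/2 − ‖(x−y)/2‖^q for all x, y ∈ X, where q ≥ 2. Then for every n ∈ ℕ and all x₁,…,xₙ in the closed unit ball of X, there exist nonempty sets A, B ⊆ {1,…,n} with max A < min B such that ‖(1/|A|)∑_{i∈A} xᵢ − (1/|B|)∑_{j∈B} xⱼ‖ ≤ 2·2/(⌊log₂ n⌋)^{1/q} whenever n ≥ 2. -/

import Mathlib

open Finset

section Aux

variable {X : Type*} [NormedAddCommGroup X] [NormedSpace ℝ X]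

/-- Average of `2^m` consecutive terms starting at `a`. -/
noncomputable def avgS (y : ℕ → X) (a m : ℕ) : X :=
  ((2 : ℝ) ^ m)⁻¹ • ∑ i ∈ Finset.range (2 ^ m), y (a + i)

lemma avgS_succ (y : ℕ → X) (a m : ℕ) :
    avgS y a (m + 1) = (1 / 2 : ℝ) • (avgS y a m + avgS y (a + 2 ^ m) m) := by
  unfold avgS
  have hsplit : ∑ i ∈ Finset.range (2 ^ (m+1)), y (a + i)
      = (∑ i ∈ Finset.range (2 ^ m), y (a + i)) +
        ∑ i ∈ Finset.range (2 ^ m), y (a + 2 ^ m + i) := by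
    rw [show 2 ^ (m+1) = 2 ^ m + 2 ^ m from by ring, Finset.sum_range_add]
    congr 1
    apply Finset.sum_congr rfl
    intro i _; congr 1; omega
  rw [hsplit, show ((2:ℝ) ^ (m+1))⁻¹ = (1/2) * ((2:ℝ) ^ m)⁻¹ from by
    rw [pow_succ, mul_inv]; ring]
  module

/-- Greedy chain of dyadic offsets: `chainP y k j` is the offset of the chosen
block of size `2 ^ (k - j)`. -/
noncomputable def chainP (y : ℕ → X) (k : ℕ) : ℕ → ℕ
  | 0 => 0
  | j + 1 =>
    let m := k - (j + 1)
    let p := chainP y k j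
    if ‖avgS y (p + 2 ^ m) m‖ ≤ ‖avgS y p m‖ then p else p + 2 ^ m

lemma chainP_bound (y : ℕ → X) (k : ℕ) : ∀ j, j ≤ k → chainP y k j + 2 ^ (k - j) ≤ 2 ^ k := by
  intro j
  induction j with
  | zero => simp [chainP]
  | succ j ih =>
    intro hj
    have hjk : j < k := by omega
    have h1 := ih (by omega)
    show (let m := k - (j+1); let p := chainP y k j;
      if ‖avgS y (p + 2 ^ m) m‖ ≤ ‖avgS y p m‖ then p else p + 2 ^ m) + 2 ^ (k - (j+1)) ≤ 2 ^ k
    have hkk : k - j = (k - (j+1)) + 1 := by omega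
    have h2 : 2 ^ (k - j) = 2 ^ (k - (j+1)) + 2 ^ (k - (j+1)) := by
      rw [hkk, pow_succ]; ring
    have hpe : 0 < 2 ^ (k - (j+1)) := Nat.pow_pos (by norm_num)
    dsimp only
    split <;> omega

lemma sum_attachFin' {M : Type*} [AddCommMonoid M] {n : ℕ} (s : Finset ℕ)
    (h : ∀ m ∈ s, m < n) (g : ℕ → M) :
    ∑ i ∈ s.attachFin h, g (i : ℕ) = ∑ m ∈ s, g m := by
  refine Finset.sum_bij (fun a _ => (a : ℕ)) ?_ ?_ ?_ ?_
  · intro a ha; rwa [Finset.mem_attachFin] at ha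
  · intro a _ b _ hab; exact Fin.ext hab
  · intro b hb
    exact ⟨⟨b, h b hb⟩, by simpa using hb, rfl⟩
  · intro a _; rfl

end Aux

lemma chain_step {X : Type*} [NormedAddCommGroup X] [NormedSpace ℝ X]
    (q : ℝ) (hq : 2 ≤ q)
    (hconv : ∀ x y : X,
      ‖(1 / 2 : ℝ) • (x + y)‖ ^ q ≤ (‖x‖ ^ q + ‖y‖ ^ q) / 2 - ‖(1 / 2 : ℝ) • (x - y)‖ ^ q)
    (y : ℕ → X) (k j : ℕ) (hj : j < k) :
    ‖avgS y (chainP y k j) (k - j)‖ ^ q +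
      ‖(1 / 2 : ℝ) • (avgS y (chainP y k j) (k - (j+1)) -
        avgS y (chainP y k j + 2 ^ (k - (j+1))) (k - (j+1)))‖ ^ q ≤
      ‖avgS y (chainP y k (j+1)) (k - (j+1))‖ ^ q := by
  set m := k - (j+1) with hm
  set p := chainP y k j with hp
  have hkj : k - j = m + 1 := by omega
  rw [hkj, avgS_succ]
  set u := avgS y p m
  set v := avgS y (p + 2 ^ m) m
  have hc := hconv u v
  have hq0 : (0:ℝ) ≤ q := by linarith
  have hch : chainP y k (j+1) = if ‖avgS y (p + 2^(k-(j+1))) (k-(j+1))‖ ≤ ‖avgS y p (k-(j+1))‖ then p else p + 2 ^ (k-(j+1)) := rfl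
  rw [← hm] at hch
  by_cases h : ‖v‖ ≤ ‖u‖
  · rw [hch, if_pos h]
    have h1 : ‖v‖ ^ q ≤ ‖u‖ ^ q := Real.rpow_le_rpow (norm_nonneg v) h hq0
    have h2 : (‖u‖ ^ q + ‖v‖ ^ q) / 2 ≤ ‖u‖ ^ q := by linarith
    show _ ≤ ‖u‖ ^ q
    linarith
  · rw [hch, if_neg h]
    push_neg at h
    have h1 : ‖u‖ ^ q ≤ ‖v‖ ^ q := Real.rpow_le_rpow (norm_nonneg u) h.le hq0
    have h2 : (‖u‖ ^ q + ‖v‖ ^ q) / 2 ≤ ‖v‖ ^ q := by linarith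
    show _ ≤ ‖v‖ ^ q
    linarith

/-- James-type condition for a norm satisfying a `q`-uniform convexity
(Clarkson-type) inequality with constant 1. -/
theorem stmt0
    (X : Type*) [NormedAddCommGroup X] [NormedSpace ℝ X] [CompleteSpace X]
    (q : ℝ) (hq : 2 ≤ q)
    (hconv : ∀ x y : X,
      ‖(1 / 2 : ℝ) • (x + y)‖ ^ q ≤ (‖x‖ ^ q + ‖y‖ ^ q) / 2 - ‖(1 / 2 : ℝ) • (x - y)‖ ^ q)
    (n : ℕ) (hn : 2 ≤ n) (x : Fin n → X) (hx : ∀ i, ‖x i‖ ≤ 1) :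
    ∃ A B : Finset (Fin n), A.Nonempty ∧ B.Nonempty ∧
      (∀ i ∈ A, ∀ j ∈ B, i < j) ∧
      ‖(A.card : ℝ)⁻¹ • ∑ i ∈ A, x i - (B.card : ℝ)⁻¹ • ∑ j ∈ B, x j‖ ≤
        2 * 2 / ((Nat.log 2 n : ℝ) ^ (1 / q)) := by
  classical
  set k := Nat.log 2 n with hk
  have hk1 : 1 ≤ k := Nat.log_pos (by norm_num) hn
  have hkn : 2 ^ k ≤ n := Nat.pow_log_le_self 2 (by omega)
  set y : ℕ → X := fun i => if h : i < n then x ⟨i, h⟩ else 0 with hy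
  have hy1 : ∀ i, ‖y i‖ ≤ 1 := by
    intro i; simp only [hy]; split
    · exact hx _
    · simp
  have hq0 : (0:ℝ) < q := by linarith
  set d : ℕ → ℝ := fun i =>
    ‖(1 / 2 : ℝ) • (avgS y (chainP y k i) (k - (i+1)) -
      avgS y (chainP y k i + 2 ^ (k - (i+1))) (k - (i+1)))‖ ^ q with hd
  have htel : ∀ j, j ≤ k → ‖avgS y 0 k‖ ^ q + ∑ i ∈ Finset.range j, d i ≤
      ‖avgS y (chainP y k j) (k - j)‖ ^ q := by
    intro j
    induction j with
    | zero => intro _; simp [chainP]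
    | succ j ih =>
      intro hj
      have h1 := ih (by omega)
      have h2 := chain_step q hq hconv y k j (by omega)
      rw [Finset.sum_range_succ]
      have hdj : d j = ‖(1 / 2 : ℝ) • (avgS y (chainP y k j) (k - (j+1)) -
        avgS y (chainP y k j + 2 ^ (k - (j+1))) (k - (j+1)))‖ ^ q := rfl
      rw [hdj]
      linarith
  have hend : ‖avgS y (chainP y k k) (k - k)‖ ^ q ≤ 1 := by
    have h0 : k - k = 0 := by omega
    rw [h0]
    have h1 : avgS y (chainP y k k) 0 = y (chainP y k k) := by simp [avgS]
    rw [h1]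
    calc ‖y (chainP y k k)‖ ^ q ≤ 1 ^ q :=
          Real.rpow_le_rpow (norm_nonneg _) (hy1 _) (by linarith)
      _ = 1 := Real.one_rpow q
  have hsum : ∑ i ∈ Finset.range k, d i ≤ 1 := by
    have h1 := htel k le_rfl
    have h2 : (0:ℝ) ≤ ‖avgS y 0 k‖ ^ q := Real.rpow_nonneg (norm_nonneg _) q
    linarith
  have hex : ∃ i ∈ Finset.range k, d i ≤ 1 / (k : ℝ) := by
    apply Finset.exists_le_of_sum_le (by simp; omega)
    have hkpos : (0:ℝ) < k := by exact_mod_cast hk1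
    have h1 : ∑ _i ∈ Finset.range k, (1 / (k:ℝ)) = (k:ℝ) * (1 / k) := by
      rw [Finset.sum_const]; simp [mul_comm]
    rw [h1, mul_one_div, div_self (ne_of_gt hkpos)]
    exact hsum
  obtain ⟨i, hi, hdi⟩ := hex
  rw [Finset.mem_range] at hi
  set m := k - (i+1) with hm
  set a := chainP y k i with ha
  have h2m : 0 < 2 ^ m := Nat.pow_pos (by norm_num)
  have hbound : a + 2 ^ m + 2 ^ m ≤ n := by
    have h1 := chainP_bound y k i (by omega)
    have h2 : k - i = m + 1 := by omega
    rw [h2, pow_succ] at h1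
    omega
  have hA : ∀ t ∈ Finset.Ico a (a + 2 ^ m), t < n := by
    intro t ht; rw [Finset.mem_Ico] at ht; omega
  have hB : ∀ t ∈ Finset.Ico (a + 2 ^ m) (a + 2 ^ m + 2 ^ m), t < n := by
    intro t ht; rw [Finset.mem_Ico] at ht; omega
  refine ⟨Finset.attachFin _ hA, Finset.attachFin _ hB, ?_, ?_, ?_, ?_⟩
  · rw [← Finset.card_pos, Finset.card_attachFin, Nat.card_Ico]
    simp
  · rw [← Finset.card_pos, Finset.card_attachFin, Nat.card_Ico]
    simp
  · intro i1 h1 j1 h2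
    rw [Finset.mem_attachFin, Finset.mem_Ico] at h1 h2
    show (i1 : ℕ) < j1
    omega
  · -- the norm bound
    have hxy : ∀ t : Fin n, x t = y (t : ℕ) := by
      intro t; simp [hy, t.isLt]
    have hcardA : (Finset.attachFin _ hA).card = 2 ^ m := by
      rw [Finset.card_attachFin, Nat.card_Ico]; omega
    have hcardB : (Finset.attachFin _ hB).card = 2 ^ m := by
      rw [Finset.card_attachFin, Nat.card_Ico]; omega
    have hsA : ∑ t ∈ Finset.attachFin _ hA, x t = ∑ t ∈ Finset.range (2 ^ m), y (a + t) := by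
      rw [show (∑ t ∈ Finset.attachFin _ hA, x t) = ∑ t ∈ Finset.attachFin _ hA, y (t : ℕ) from
        Finset.sum_congr rfl fun t _ => hxy t]
      rw [sum_attachFin', Finset.sum_Ico_eq_sum_range]
      simp [Nat.add_sub_cancel_left]
    have hsB : ∑ t ∈ Finset.attachFin _ hB, x t
        = ∑ t ∈ Finset.range (2 ^ m), y (a + 2 ^ m + t) := by
      rw [show (∑ t ∈ Finset.attachFin _ hB, x t) = ∑ t ∈ Finset.attachFin _ hB, y (t : ℕ) from
        Finset.sum_congr rfl fun t _ => hxy t]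
      rw [sum_attachFin', Finset.sum_Ico_eq_sum_range]
      simp [Nat.add_sub_cancel_left]
    have hAvgA : ((Finset.attachFin _ hA).card : ℝ)⁻¹ • ∑ t ∈ Finset.attachFin _ hA, x t
        = avgS y a m := by
      rw [hcardA, hsA, avgS]; push_cast; ring_nf
    have hAvgB : ((Finset.attachFin _ hB).card : ℝ)⁻¹ • ∑ t ∈ Finset.attachFin _ hB, x t
        = avgS y (a + 2 ^ m) m := by
      rw [hcardB, hsB, avgS]; push_cast; ring_nf
    rw [hAvgA, hAvgB]
    set w := (1 / 2 : ℝ) • (avgS y a m - avgS y (a + 2 ^ m) m) with hw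
    have hdiw : ‖w‖ ^ q ≤ 1 / (k : ℝ) := hdi
    have hnw : ‖avgS y a m - avgS y (a + 2 ^ m) m‖ = 2 * ‖w‖ := by
      have : avgS y a m - avgS y (a + 2 ^ m) m = (2:ℝ) • w := by
        rw [hw, smul_smul]; norm_num
      rw [this, norm_smul]; simp
    rw [hnw]
    have hkpos : (0:ℝ) < k := by exact_mod_cast hk1
    have hwle : ‖w‖ ≤ ((k:ℝ) ^ (1/q))⁻¹ := by
      have h1 : (‖w‖ ^ q) ^ (1/q) ≤ (1 / (k:ℝ)) ^ (1/q) :=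
        Real.rpow_le_rpow (Real.rpow_nonneg (norm_nonneg _) q) hdiw (by positivity)
      have h2 : (‖w‖ ^ q) ^ (1/q) = ‖w‖ := by
        rw [← Real.rpow_mul (norm_nonneg _), mul_one_div, div_self (ne_of_gt hq0),
          Real.rpow_one]
      have h3 : ((1:ℝ) / (k:ℝ)) ^ (1/q) = ((k:ℝ) ^ (1/q))⁻¹ := by
        rw [one_div, Real.inv_rpow (le_of_lt hkpos)]
      rw [h2, h3] at h1
      exact h1
    have hrpos : (0:ℝ) < (k:ℝ) ^ (1/q) := Real.rpow_pos_of_pos hkpos _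
    rw [div_eq_mul_inv]
    calc 2 * ‖w‖ ≤ 2 * ((k:ℝ) ^ (1/q))⁻¹ := by linarith
      _ ≤ 2 * 2 * ((k:ℝ) ^ (1/q))⁻¹ := by
          have : (0:ℝ) ≤ ((k:ℝ) ^ (1/q))⁻¹ := by positivity
          nlinarith
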